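/- arXiv:0801.0079 — 3 statements merged into one kernel-verified Lean document; each statement's English description precedes it below -/
import Mathlib

section
/- (Key step of Theorem 2, equation (2.17): invariance of SDMMSA under one PAVA pooling step) Suppose Ȳ_j > Ȳ_{j+1} for some j ∈ [1,k−1]. Let j_l be the smallest integer such that Ȳ_i = Ȳ_j for all i ∈ [j_l, j], and let j_u be the largest integer such that Ȳ_i = Ȳ_{j+1} for all i ∈ [j+1, j_u]. Define a new data vector (a_1,…,a_k) by a_i = Ȳ_i for i ∉ [j_l, j_u] and a_i = Ȳ_{j_l,j_u} = (Σ_{v=j_l}^{j_u} n_v Ȳ_v)/(Σ_{v=j_l}^{j_u} n_v) for i ∈ [j_l, j_u]. Then the SDMMSA estimates (with the same weights n_1,…,n_k) are unchanged: μ̂_i(Ȳ_1,…,Ȳ_k) = μ̂_i(a_1,…,a_k) for every i ∈ [1,k]. -/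
open Finset

noncomputable section SDMMSA

/-- Pooled weight `n_{i,j} = ∑_{h=i}^j n_h`. -/
def pooledWeight (n : ℕ → ℝ) (i j : ℕ) : ℝ := ∑ h ∈ Finset.Icc i j, n h

/-- Pooled (weighted) mean `Ȳ_{i,j} = (∑_{h=i}^j n_h Y_h) / n_{i,j}`. -/
def pooledMean (n Y : ℕ → ℝ) (i j : ℕ) : ℝ :=
  (∑ h ∈ Finset.Icc i j, n h * Y h) / pooledWeight n i j

/-- The first SDMMSA index for the data `(Y_1,n_1),…,(Y_t,n_t)`:
the smallest `j ∈ [1,t]` at which `Ȳ_{j,t} = max_{1 ≤ j' ≤ t} Ȳ_{j',t}`. -/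
def firstIdx (n Y : ℕ → ℝ) (t : ℕ) : ℕ :=
  sInf {j | 1 ≤ j ∧ j ≤ t ∧ ∀ j', 1 ≤ j' → j' ≤ t → pooledMean n Y j' t ≤ pooledMean n Y j t}

/-- Fuel-based recursion implementing the SDMMSA step-down procedure: on data range `[1,t]`,
every `i ≥ i₁ = firstIdx n Y t` gets the pooled mean `Ȳ_{i₁,t}` of the top block, and for
`i < i₁` we recurse on the data range `[1, i₁ - 1]`.  A fuel of `t` suffices since the
range shrinks strictly at each step. -/
def sdmmsaAux (n Y : ℕ → ℝ) : ℕ → ℕ → ℕ → ℝ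
  | 0, _, _ => 0
  | fuel + 1, t, i =>
      if firstIdx n Y t ≤ i then pooledMean n Y (firstIdx n Y t) t
      else sdmmsaAux n Y fuel (firstIdx n Y t - 1) i

/-- `muhat n Y k i` is the SDMMSA estimate `μ̂_i` computed from the data
`(Y_1,n_1),…,(Y_k,n_k)`. -/
def muhat (n Y : ℕ → ℝ) (k i : ℕ) : ℝ := sdmmsaAux n Y k k i

/-- The SDMMSA indices `i_u` computed from the data `(Y_1,n_1),…,(Y_k,n_k)`:
`sdIdx n Y k 0 = i_0 = k+1` and `i_{u+1}` is the first SDMMSA index of `[1, i_u - 1]`. -/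
def sdIdx (n Y : ℕ → ℝ) (k : ℕ) : ℕ → ℕ
  | 0 => k + 1
  | u + 1 => firstIdx n Y (sdIdx n Y k u - 1)

/-- The number of steps `h` of the SDMMSA: the first `u` with `i_u = 1`. -/
def sdSteps (n Y : ℕ → ℝ) (k : ℕ) : ℕ := sInf {u | sdIdx n Y k u = 1}

end SDMMSA

set_option linter.unusedVariables false

-- weighted average toolkit
private lemma wavg_lt_left {w1 w2 m1 m2 : ℝ} (h1 : 0 < w1) (h2 : 0 < w2)
    (h : m2 < m1) : (w1 * m1 + w2 * m2) / (w1 + w2) < m1 := by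
  rw [div_lt_iff₀ (by linarith)]; nlinarith

private lemma wavg_lt_right {w1 w2 m1 m2 : ℝ} (h1 : 0 < w1) (h2 : 0 < w2)
    (h : m1 < m2) : (w1 * m1 + w2 * m2) / (w1 + w2) < m2 := by
  rw [div_lt_iff₀ (by linarith)]; nlinarith

private lemma wavg_le_left {w1 w2 m1 m2 : ℝ} (h1 : 0 < w1) (h2 : 0 < w2)
    (h : m2 ≤ m1) : (w1 * m1 + w2 * m2) / (w1 + w2) ≤ m1 := by
  rw [div_le_iff₀ (by linarith)]; nlinarith

private lemma right_lt_wavg {w1 w2 m1 m2 : ℝ} (h1 : 0 < w1) (h2 : 0 < w2)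
    (h : m2 < m1) : m2 < (w1 * m1 + w2 * m2) / (w1 + w2) := by
  rw [lt_div_iff₀ (by linarith)]; nlinarith

private lemma right_le_wavg {w1 w2 m1 m2 : ℝ} (h1 : 0 < w1) (h2 : 0 < w2)
    (h : m2 ≤ m1) : m2 ≤ (w1 * m1 + w2 * m2) / (w1 + w2) := by
  rw [le_div_iff₀ (by linarith)]; nlinarith

private lemma wavg_le_left_of_right_le {w1 w2 m1 m2 : ℝ} (h1 : 0 < w1) (h2 : 0 < w2)
    (h : m2 ≤ (w1 * m1 + w2 * m2) / (w1 + w2)) : (w1 * m1 + w2 * m2) / (w1 + w2) ≤ m1 := by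
  rw [le_div_iff₀ (by linarith)] at h
  rw [div_le_iff₀ (by linarith)]; nlinarith


private lemma sum_Icc_split (f : ℕ → ℝ) {i m t : ℕ} (him : i ≤ m + 1) (hmt : m ≤ t) :
    ∑ h ∈ Finset.Icc i t, f h
      = (∑ h ∈ Finset.Icc i m, f h) + ∑ h ∈ Finset.Icc (m+1) t, f h := by
  rcases Nat.lt_or_ge i (m+1) with h | h
  · rw [← Finset.sum_union]
    · congr 1
      ext x; simp only [Finset.mem_union, Finset.mem_Icc]; omega
    · rw [Finset.disjoint_left]
      intro x hx hx'
      simp only [Finset.mem_Icc] at hx hx'; omega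
  · have hi : i = m + 1 := by omega
    subst hi
    have he : Finset.Icc (m+1) m = ∅ := Finset.Icc_eq_empty (by omega)
    rw [he]
    simp only [Finset.sum_empty, zero_add]

private lemma pW_pos {n : ℕ → ℝ} {k : ℕ} (hn : ∀ h, 1 ≤ h → h ≤ k → 0 < n h)
    {i t : ℕ} (h1 : 1 ≤ i) (h2 : i ≤ t) (h3 : t ≤ k) : 0 < pooledWeight n i t := by
  unfold pooledWeight
  apply Finset.sum_pos
  · intro h hh
    rw [Finset.mem_Icc] at hh
    exact hn h (le_trans h1 hh.1) (le_trans hh.2 h3)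
  · exact ⟨i, by simp [h2]⟩

private lemma pW_mul_pM {n Y : ℕ → ℝ} {i t : ℕ} (hW : pooledWeight n i t ≠ 0) :
    pooledWeight n i t * pooledMean n Y i t = ∑ h ∈ Finset.Icc i t, n h * Y h := by
  unfold pooledMean
  field_simp

private lemma pM_const {n Y : ℕ → ℝ} {k : ℕ} (hn : ∀ h, 1 ≤ h → h ≤ k → 0 < n h)
    {i t : ℕ} (h1 : 1 ≤ i) (h2 : i ≤ t) (h3 : t ≤ k)
    {c : ℝ} (hc : ∀ h, i ≤ h → h ≤ t → Y h = c) : pooledMean n Y i t = c := by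
  have hW := pW_pos hn h1 h2 h3
  unfold pooledMean
  have : ∑ h ∈ Finset.Icc i t, n h * Y h = c * pooledWeight n i t := by
    unfold pooledWeight
    rw [Finset.mul_sum]
    apply Finset.sum_congr rfl
    intro h hh
    rw [Finset.mem_Icc] at hh
    rw [hc h hh.1 hh.2]; ring
  rw [this, mul_div_assoc, div_self hW.ne', mul_one]

private lemma pM_split {n Y : ℕ → ℝ} {k : ℕ} (hn : ∀ h, 1 ≤ h → h ≤ k → 0 < n h)
    {i m t : ℕ} (h1 : 1 ≤ i) (him : i ≤ m) (hmt : m < t) (htk : t ≤ k) :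
    pooledMean n Y i t =
      (pooledWeight n i m * pooledMean n Y i m
        + pooledWeight n (m+1) t * pooledMean n Y (m+1) t)
        / (pooledWeight n i m + pooledWeight n (m+1) t) := by
  have w1 := pW_pos hn h1 him (by omega)
  have hm1 : m + 1 ≤ t := by omega
  have w2 := pW_pos hn (show 1 ≤ m + 1 by omega) hm1 htk
  rw [pW_mul_pM w1.ne', pW_mul_pM w2.ne']
  unfold pooledMean
  rw [sum_Icc_split (fun h => n h * Y h) (i := i) (m := m) (t := t) (by omega) (by omega)]
  congr 1
  unfold pooledWeight
  exact sum_Icc_split n (i := i) (m := m) (t := t) (by omega) (by omega)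

structure PCtx (n Y : ℕ → ℝ) (k j jl ju : ℕ) : Prop where
  hn : ∀ h, 1 ≤ h → h ≤ k → 0 < n h
  hj1 : 1 ≤ j
  hjk : j + 1 ≤ k
  hviol : Y (j + 1) < Y j
  hjl1 : 1 ≤ jl
  hjlj : jl ≤ j
  hjlconst : ∀ i, jl ≤ i → i ≤ j → Y i = Y j
  hju1 : j + 1 ≤ ju
  hjuk : ju ≤ k
  hjuconst : ∀ i, j + 1 ≤ i → i ≤ ju → Y i = Y (j + 1)

namespace PCtx
variable {n Y : ℕ → ℝ} {k j jl ju : ℕ} (H : PCtx n Y k j jl ju)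
include H

lemma jk : j ≤ k := by have := H.hjk; omega
lemma julk : jl ≤ k := le_trans H.hjlj H.jk
lemma jlju : jl ≤ ju := by have := H.hjlj; have := H.hju1; omega

lemma pM_c1 {i' m : ℕ} (h1 : jl ≤ i') (h2 : i' ≤ m) (h3 : m ≤ j) :
    pooledMean n Y i' m = Y j :=
  pM_const H.hn (le_trans H.hjl1 h1) h2 (le_trans h3 H.jk) (fun h hh1 hh2 =>
    H.hjlconst h (le_trans h1 hh1) (le_trans hh2 h3))

lemma pM_c2 {i' m : ℕ} (h1 : j + 1 ≤ i') (h2 : i' ≤ m) (h3 : m ≤ ju) :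
    pooledMean n Y i' m = Y (j + 1) :=
  pM_const H.hn (by omega) h2 (le_trans h3 H.hjuk) (fun h hh1 hh2 =>
    H.hjuconst h (le_trans h1 hh1) (le_trans hh2 h3))

/-- `F0`: every left-anchored mean inside the block is `> c2`. -/
lemma F0 {m : ℕ} (h1 : jl ≤ m) (h2 : m ≤ ju) : Y (j + 1) < pooledMean n Y jl m := by
  have hC1 := H.hju1; have hC2 := H.hjlj; have hC3 := H.hjl1; have hC4 := H.hjk; have hC5 := H.hjuk
  rcases le_or_gt m j with hmj | hmj
  · rw [H.pM_c1 le_rfl h1 hmj]; exact H.hviol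
  · rw [pM_split H.hn (m := j) H.hjl1 H.hjlj hmj (le_trans h2 H.hjuk),
      H.pM_c1 le_rfl H.hjlj le_rfl, H.pM_c2 le_rfl (by omega) h2]
    exact right_lt_wavg (pW_pos H.hn H.hjl1 H.hjlj H.jk)
      (pW_pos H.hn (by omega) (by omega) (le_trans h2 H.hjuk)) H.hviol

/-- `F1`: proper left-anchored sub-block means strictly exceed the pooled mean `a`. -/
lemma F1 {m : ℕ} (h1 : jl ≤ m) (h2 : m < ju) : pooledMean n Y jl ju < pooledMean n Y jl m := by
  have hC1 := H.hju1; have hC2 := H.hjlj; have hC3 := H.hjl1; have hC4 := H.hjk; have hC5 := H.hjuk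
  have hWl := pW_pos H.hn H.hjl1 H.hjlj H.jk
  rcases le_or_gt m j with hmj | hmj
  · rw [H.pM_c1 le_rfl h1 hmj]
    rw [pM_split H.hn (m := j) H.hjl1 H.hjlj (by omega) H.hjuk,
      H.pM_c1 le_rfl H.hjlj le_rfl, H.pM_c2 le_rfl (by omega) le_rfl]
    exact wavg_lt_left hWl (pW_pos H.hn (by omega) H.hju1 H.hjuk) H.hviol
  · rw [pM_split H.hn (m := m) H.hjl1 h1 h2 H.hjuk,
      H.pM_c2 (by omega) (by omega) le_rfl]
    exact wavg_lt_left (pW_pos H.hn H.hjl1 h1 (by omega))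
      (pW_pos H.hn (by omega) (by omega) H.hjuk) (H.F0 h1 (by omega))

/-- `F2`: proper right-anchored sub-block means are strictly below the pooled mean `a`. -/
lemma F2 {j' : ℕ} (h1 : jl < j') (h2 : j' ≤ ju) :
    pooledMean n Y j' ju < pooledMean n Y jl ju := by
  have hC1 := H.hju1; have hC2 := H.hjlj; have hC3 := H.hjl1; have hC4 := H.hjk; have hC5 := H.hjuk
  have hsplit : pooledMean n Y jl ju =
      (pooledWeight n jl (j'-1) * pooledMean n Y jl (j'-1)
        + pooledWeight n j' ju * pooledMean n Y j' ju)
        / (pooledWeight n jl (j'-1) + pooledWeight n j' ju) := by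
    have := pM_split H.hn (Y := Y) (i := jl) (m := j' - 1) (t := ju)
      H.hjl1 (by omega) (by omega) H.hjuk
    simpa [show j' - 1 + 1 = j' by omega] using this
  have hw1 := pW_pos H.hn H.hjl1 (show jl ≤ j' - 1 by omega)
    (le_trans (show j' - 1 ≤ ju by omega) H.hjuk)
  have hw2 := pW_pos H.hn (by omega) h2 H.hjuk
  rcases le_or_gt j' (j + 1) with hj' | hj'
  · rcases lt_or_ge j' (j + 1) with hj'' | hj''
    · -- j' ≤ j : pooledMean j' ju < c1 = pooledMean jl (j'-1)
      have hlt : pooledMean n Y j' ju < Y j := by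
        rw [pM_split H.hn (m := j) (by omega) (by omega) (by omega) H.hjuk,
          H.pM_c1 (by omega) (by omega) le_rfl, H.pM_c2 le_rfl (by omega) le_rfl]
        exact wavg_lt_left (pW_pos H.hn (by omega) (by omega) H.jk)
          (pW_pos H.hn (by omega) H.hju1 H.hjuk) H.hviol
      rw [hsplit, H.pM_c1 le_rfl (by omega) (by omega)]
      exact right_lt_wavg hw1 hw2 hlt
    · -- j' = j + 1
      have hlt : pooledMean n Y j' ju < pooledMean n Y jl (j' - 1) := by
        rw [H.pM_c2 (by omega) h2 le_rfl, H.pM_c1 le_rfl (by omega) (by omega)]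
        exact H.hviol
      rw [hsplit]
      exact right_lt_wavg hw1 hw2 hlt
  · -- j' > j + 1
    have hlt : pooledMean n Y j' ju < pooledMean n Y jl (j' - 1) := by
      rw [H.pM_c2 (by omega) h2 le_rfl]
      exact H.F0 (by omega) (by omega)
    rw [hsplit]
    exact right_lt_wavg hw1 hw2 hlt

/-- KEY for `Y`: an interior index of the pooled block is strictly beaten. -/
lemma keyY {t j' : ℕ} (htu : ju ≤ t) (htk : t ≤ k) (h1 : jl < j') (h2 : j' ≤ ju) :
    pooledMean n Y j' t < pooledMean n Y jl t ∨
      (ju < t ∧ pooledMean n Y j' t < pooledMean n Y (ju+1) t) := by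
  have hC1 := H.hju1; have hC2 := H.hjlj; have hC3 := H.hjl1; have hC4 := H.hjk; have hC5 := H.hjuk
  rcases eq_or_lt_of_le htu with hteq | htlt
  · left; rw [← hteq]; exact H.F2 h1 h2
  · by_cases hB : pooledMean n Y j' t < pooledMean n Y (ju+1) t
    · right; exact ⟨htlt, hB⟩
    push_neg at hB
    left
    have w1 := pW_pos H.hn (show 1 ≤ j' by omega) h2 (by omega)
    have w2 := pW_pos H.hn (show 1 ≤ ju + 1 by omega) (by omega) htk
    have hsplit1 : pooledMean n Y j' t =
        (pooledWeight n j' ju * pooledMean n Y j' ju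
          + pooledWeight n (ju+1) t * pooledMean n Y (ju+1) t)
          / (pooledWeight n j' ju + pooledWeight n (ju+1) t) :=
      pM_split H.hn (by omega) h2 htlt htk
    have h3 : pooledMean n Y j' t ≤ pooledMean n Y j' ju := by
      rw [hsplit1] at hB ⊢
      exact wavg_le_left_of_right_le w1 w2 hB
    have h4 := H.F2 h1 h2
    have h5 := H.F1 (m := j' - 1) (by omega) (by omega)
    have w1' := pW_pos H.hn hC3 (show jl ≤ j' - 1 by omega) (by omega)
    have w2' := pW_pos H.hn (show 1 ≤ j' by omega) (show j' ≤ t by omega) htk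
    have hsplit2 : pooledMean n Y jl t =
        (pooledWeight n jl (j'-1) * pooledMean n Y jl (j'-1)
          + pooledWeight n j' t * pooledMean n Y j' t)
          / (pooledWeight n jl (j'-1) + pooledWeight n j' t) := by
      have := pM_split H.hn (Y := Y) (i := jl) (m := j' - 1) (t := t)
        hC3 (by omega) (by omega) htk
      simpa [show j' - 1 + 1 = j' by omega] using this
    rw [hsplit2]
    exact right_lt_wavg w1' w2' (by linarith)

end PCtx

/-- The data vector after one PAVA pooling step. -/
noncomputable def pavaPool (n Y : ℕ → ℝ) (jl ju : ℕ) : ℕ → ℝ :=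
  fun v => if jl ≤ v ∧ v ≤ ju then pooledMean n Y jl ju else Y v

namespace PCtx
variable {n Y : ℕ → ℝ} {k j jl ju : ℕ} (H : PCtx n Y k j jl ju)
include H

/-- The pooled vector is constant `a` on any subinterval of the block. -/
lemma pM'_const {i' t' : ℕ} (h1 : jl ≤ i') (h2 : i' ≤ t') (h3 : t' ≤ ju) :
    pooledMean n (pavaPool n Y jl ju) i' t' = pooledMean n Y jl ju := by
  have hC3 := H.hjl1
  refine pM_const H.hn (by omega) h2 (le_trans h3 H.hjuk) (fun h hh1 hh2 => ?_)
  unfold pavaPool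
  rw [if_pos ⟨le_trans h1 hh1, le_trans hh2 h3⟩]

/-- Pooled means agree for windows disjoint from, or containing, the block. -/
lemma pM'_eq {i t : ℕ} (h1 : 1 ≤ i) (h2 : i ≤ t) (h3 : t ≤ k)
    (h4 : t < jl ∨ ju < i ∨ (i ≤ jl ∧ ju ≤ t)) :
    pooledMean n (pavaPool n Y jl ju) i t = pooledMean n Y i t := by
  have hC1 := H.hju1; have hC2 := H.hjlj; have hC3 := H.hjl1; have hC5 := H.hjuk
  have hblock : ∑ h ∈ Finset.Icc jl ju, n h * (pavaPool n Y jl ju) h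
      = ∑ h ∈ Finset.Icc jl ju, n h * Y h := by
    have e1 : ∑ h ∈ Finset.Icc jl ju, n h * (pavaPool n Y jl ju) h
        = pooledWeight n jl ju * pooledMean n Y jl ju := by
      unfold pooledWeight
      rw [Finset.sum_mul]
      apply Finset.sum_congr rfl
      intro h hh
      rw [Finset.mem_Icc] at hh
      unfold pavaPool
      rw [if_pos ⟨hh.1, hh.2⟩]
    rw [e1, pW_mul_pM (pW_pos H.hn hC3 (by omega) hC5).ne']
  rcases h4 with hc | hc | ⟨hc1, hc2⟩
  · unfold pooledMean
    congr 1
    apply Finset.sum_congr rfl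
    intro h hh
    rw [Finset.mem_Icc] at hh
    unfold pavaPool
    rw [if_neg (by omega)]
  · unfold pooledMean
    congr 1
    apply Finset.sum_congr rfl
    intro h hh
    rw [Finset.mem_Icc] at hh
    unfold pavaPool
    rw [if_neg (by omega)]
  · unfold pooledMean
    congr 1
    have spl : ∀ g : ℕ → ℝ, ∑ h ∈ Finset.Icc i t, g h
        = (∑ h ∈ Finset.Icc i (jl-1), g h) + (∑ h ∈ Finset.Icc jl ju, g h)
          + ∑ h ∈ Finset.Icc (ju+1) t, g h := by
      intro g
      rw [sum_Icc_split g (i := i) (m := jl - 1) (t := t) (by omega) (by omega),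
        show jl - 1 + 1 = jl by omega,
        sum_Icc_split g (i := jl) (m := ju) (t := t) (by omega) (by omega), add_assoc]
    rw [spl, spl, hblock]
    congr 1
    · congr 1
      apply Finset.sum_congr rfl
      intro h hh
      rw [Finset.mem_Icc] at hh
      unfold pavaPool
      rw [if_neg (by omega)]
    · apply Finset.sum_congr rfl
      intro h hh
      rw [Finset.mem_Icc] at hh
      unfold pavaPool
      rw [if_neg (by omega)]

/-- KEY for the pooled vector. -/
lemma keyY' {t j' : ℕ} (htu : ju ≤ t) (htk : t ≤ k) (h1 : jl < j') (h2 : j' ≤ ju) :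
    pooledMean n (pavaPool n Y jl ju) j' t ≤ pooledMean n (pavaPool n Y jl ju) jl t ∨
      (ju < t ∧ pooledMean n (pavaPool n Y jl ju) j' t
        < pooledMean n (pavaPool n Y jl ju) (ju+1) t) := by
  have hC1 := H.hju1; have hC2 := H.hjlj; have hC3 := H.hjl1; have hC5 := H.hjuk
  set Y' := pavaPool n Y jl ju with hY'
  rcases eq_or_lt_of_le htu with hteq | htlt
  · left
    rw [← hteq, H.pM'_const le_rfl (by omega) le_rfl, H.pM'_const (by omega) h2 le_rfl]
  · have w1 := pW_pos H.hn (show 1 ≤ j' by omega) h2 (by omega)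
    have w2 := pW_pos H.hn (show 1 ≤ ju + 1 by omega) (by omega) htk
    have hsplit1 : pooledMean n Y' j' t =
        (pooledWeight n j' ju * pooledMean n Y jl ju
          + pooledWeight n (ju+1) t * pooledMean n Y' (ju+1) t)
          / (pooledWeight n j' ju + pooledWeight n (ju+1) t) := by
      rw [pM_split H.hn (Y := Y') (i := j') (m := ju) (t := t) (by omega) h2 htlt htk,
        H.pM'_const (by omega) h2 le_rfl]
    by_cases hB : pooledMean n Y jl ju < pooledMean n Y' (ju+1) t
    · right
      refine ⟨htlt, ?_⟩
      rw [hsplit1]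
      exact wavg_lt_right w1 w2 hB
    · push_neg at hB
      left
      have h3 : pooledMean n Y' j' t ≤ pooledMean n Y jl ju := by
        rw [hsplit1]
        exact wavg_le_left w1 w2 hB
      have w1' := pW_pos H.hn hC3 (show jl ≤ j' - 1 by omega) (by omega)
      have w2' := pW_pos H.hn (show 1 ≤ j' by omega) (show j' ≤ t by omega) htk
      have hsplit2 : pooledMean n Y' jl t =
          (pooledWeight n jl (j'-1) * pooledMean n Y jl ju
            + pooledWeight n j' t * pooledMean n Y' j' t)
            / (pooledWeight n jl (j'-1) + pooledWeight n j' t) := by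
        have := pM_split H.hn (Y := Y') (i := jl) (m := j' - 1) (t := t)
          hC3 (by omega) (by omega) htk
        rw [this, H.pM'_const le_rfl (by omega) (by omega),
          show j' - 1 + 1 = j' by omega]
      rw [hsplit2]
      exact right_le_wavg w1' w2' h3

end PCtx

/-- The set whose infimum is `firstIdx`. -/
def FSet (n Y : ℕ → ℝ) (t : ℕ) : Set ℕ :=
  {j | 1 ≤ j ∧ j ≤ t ∧ ∀ j', 1 ≤ j' → j' ≤ t → pooledMean n Y j' t ≤ pooledMean n Y j t}

lemma firstIdx_def (n Y : ℕ → ℝ) (t : ℕ) : firstIdx n Y t = sInf (FSet n Y t) := rfl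

lemma FSet_nonempty (n Y : ℕ → ℝ) {t : ℕ} (ht : 1 ≤ t) : (FSet n Y t).Nonempty := by
  obtain ⟨b, hb, hmax⟩ := Finset.exists_max_image (Finset.Icc 1 t)
    (fun j' => pooledMean n Y j' t) ⟨1, by simp [ht]⟩
  rw [Finset.mem_Icc] at hb
  exact ⟨b, hb.1, hb.2, fun j' h1 h2 => hmax j' (Finset.mem_Icc.mpr ⟨h1, h2⟩)⟩

lemma firstIdx_mem (n Y : ℕ → ℝ) {t : ℕ} (ht : 1 ≤ t) : firstIdx n Y t ∈ FSet n Y t :=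
  Nat.sInf_mem (FSet_nonempty n Y ht)

lemma firstIdx_zero (n Y : ℕ → ℝ) : firstIdx n Y 0 = 0 := by
  rw [firstIdx_def]
  convert Nat.sInf_empty
  rw [Set.eq_empty_iff_forall_notMem]
  intro x hx
  exact absurd (le_trans hx.1 hx.2.1) (by omega)

namespace PCtx
variable {n Y : ℕ → ℝ} {k j jl ju : ℕ} (H : PCtx n Y k j jl ju)
include H

lemma firstIdx_Y_outside {t : ℕ} (htu : ju ≤ t) (htk : t ≤ k) :
    firstIdx n Y t ≤ jl ∨ ju < firstIdx n Y t := by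
  have hC1 := H.hju1; have hC2 := H.hjlj; have hC3 := H.hjl1
  have hf := firstIdx_mem n Y (t := t) (by omega)
  by_contra hcon
  push_neg at hcon
  rcases H.keyY htu htk hcon.1 hcon.2 with hlt | ⟨hju, hlt⟩
  · exact absurd (hf.2.2 jl (by omega) (by omega)) (by linarith)
  · exact absurd (hf.2.2 (ju+1) (by omega) (by omega)) (by linarith)

lemma firstIdx_Y'_outside {t : ℕ} (htu : ju ≤ t) (htk : t ≤ k) :
    firstIdx n (pavaPool n Y jl ju) t ≤ jl ∨ ju < firstIdx n (pavaPool n Y jl ju) t := by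
  have hC1 := H.hju1; have hC2 := H.hjlj; have hC3 := H.hjl1
  set Y' := pavaPool n Y jl ju with hY'
  have hf := firstIdx_mem n Y' (t := t) (by omega)
  by_contra hcon
  push_neg at hcon
  rcases H.keyY' htu htk hcon.1 hcon.2 with hle | ⟨hju, hlt⟩
  · have hjlmem : jl ∈ FSet n Y' t :=
      ⟨hC3, by omega, fun j'' h1 h2 => le_trans (hf.2.2 j'' h1 h2) hle⟩
    have := Nat.sInf_le hjlmem
    rw [← firstIdx_def] at this
    omega
  · exact absurd (hf.2.2 (ju+1) (by omega) (by omega)) (by linarith)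

lemma firstIdx_eq {t : ℕ} (htk : t ≤ k) (hcond : t < jl ∨ ju ≤ t) :
    firstIdx n Y t = firstIdx n (pavaPool n Y jl ju) t := by
  have hC1 := H.hju1; have hC2 := H.hjlj; have hC3 := H.hjl1
  set Y' := pavaPool n Y jl ju with hY'
  rcases hcond with hc | hc
  · -- window strictly left of the block: the data agree
    have hM : ∀ j', 1 ≤ j' → j' ≤ t → pooledMean n Y' j' t = pooledMean n Y j' t :=
      fun j' a b => H.pM'_eq a b htk (Or.inl hc)
    rw [firstIdx_def, firstIdx_def]
    congr 1
    ext x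
    constructor
    · rintro ⟨a, b, c⟩
      exact ⟨a, b, fun j' d e => by rw [hM j' d e, hM x a b]; exact c j' d e⟩
    · rintro ⟨a, b, c⟩
      exact ⟨a, b, fun j' d e => by rw [← hM j' d e, ← hM x a b]; exact c j' d e⟩
  · -- window contains the block
    have ht1 : 1 ≤ t := by omega
    have hM : ∀ i, 1 ≤ i → i ≤ t → (i ≤ jl ∨ ju < i) →
        pooledMean n Y' i t = pooledMean n Y i t := by
      intro i a b c
      rcases c with c | c
      · exact H.pM'_eq a b htk (Or.inr (Or.inr ⟨c, hc⟩))
      · exact H.pM'_eq a b htk (Or.inr (Or.inl c))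
    have hfY := firstIdx_mem n Y ht1
    have hfY' := firstIdx_mem n Y' ht1
    have houtY := H.firstIdx_Y_outside hc htk
    have houtY' := H.firstIdx_Y'_outside hc htk
    have hMf : pooledMean n Y' (firstIdx n Y t) t = pooledMean n Y (firstIdx n Y t) t :=
      hM _ hfY.1 hfY.2.1 houtY
    have hMf' : pooledMean n Y' (firstIdx n Y' t) t = pooledMean n Y (firstIdx n Y' t) t :=
      hM _ hfY'.1 hfY'.2.1 houtY'
    have hin : firstIdx n Y t ∈ FSet n Y' t := by
      refine ⟨hfY.1, hfY.2.1, fun j'' h1 h2 => ?_⟩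
      rw [hMf]
      by_cases hj'' : jl < j'' ∧ j'' ≤ ju
      · rcases H.keyY' hc htk hj''.1 hj''.2 with hle | ⟨hju, hlt⟩
        · calc pooledMean n Y' j'' t ≤ pooledMean n Y' jl t := hle
            _ = pooledMean n Y jl t := hM jl hC3 (by omega) (Or.inl le_rfl)
            _ ≤ _ := hfY.2.2 jl (by omega) (by omega)
        · calc pooledMean n Y' j'' t ≤ pooledMean n Y' (ju+1) t := le_of_lt hlt
            _ = pooledMean n Y (ju+1) t := hM (ju+1) (by omega) (by omega) (Or.inr (by omega))
            _ ≤ _ := hfY.2.2 (ju+1) (by omega) (by omega)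
      · rw [hM j'' h1 h2 (by omega)]
        exact hfY.2.2 j'' h1 h2
    have hin' : firstIdx n Y' t ∈ FSet n Y t := by
      refine ⟨hfY'.1, hfY'.2.1, fun j'' h1 h2 => ?_⟩
      rw [← hMf']
      by_cases hj'' : jl < j'' ∧ j'' ≤ ju
      · rcases H.keyY hc htk hj''.1 hj''.2 with hlt | ⟨hju, hlt⟩
        · calc pooledMean n Y j'' t ≤ pooledMean n Y jl t := le_of_lt hlt
            _ = pooledMean n Y' jl t := (hM jl hC3 (by omega) (Or.inl le_rfl)).symm
            _ ≤ _ := hfY'.2.2 jl (by omega) (by omega)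
        · calc pooledMean n Y j'' t ≤ pooledMean n Y (ju+1) t := le_of_lt hlt
            _ = pooledMean n Y' (ju+1) t := (hM (ju+1) (by omega) (by omega) (Or.inr (by omega))).symm
            _ ≤ _ := hfY'.2.2 (ju+1) (by omega) (by omega)
      · rw [← hM j'' h1 h2 (by omega)]
        exact hfY'.2.2 j'' h1 h2
    have l1 : firstIdx n Y' t ≤ firstIdx n Y t := Nat.sInf_le hin
    have l2 : firstIdx n Y t ≤ firstIdx n Y' t := Nat.sInf_le hin'
    omega

lemma sdmmsa_eq : ∀ fuel t i, t ≤ k → (t < jl ∨ ju ≤ t) →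
    sdmmsaAux n Y fuel t i = sdmmsaAux n (pavaPool n Y jl ju) fuel t i := by
  have hC1 := H.hju1; have hC2 := H.hjlj; have hC3 := H.hjl1
  intro fuel
  induction fuel with
  | zero => intro t i _ _; rfl
  | succ fuel ih =>
    intro t i htk hcond
    have hfi := H.firstIdx_eq htk hcond
    show (if firstIdx n Y t ≤ i then _ else _) = (if firstIdx n (pavaPool n Y jl ju) t ≤ i then _ else _)
    rw [← hfi]
    by_cases hbr : firstIdx n Y t ≤ i
    · rw [if_pos hbr, if_pos hbr]
      rcases hcond with hc | hc
      · unfold pooledMean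
        congr 1
        apply Finset.sum_congr rfl
        intro h hh
        rw [Finset.mem_Icc] at hh
        unfold pavaPool
        rw [if_neg (by omega)]
      · have ht1 : 1 ≤ t := by omega
        have hf := firstIdx_mem n Y ht1
        have hout := H.firstIdx_Y_outside hc htk
        refine (H.pM'_eq hf.1 hf.2.1 htk ?_).symm
        rcases hout with h | h
        · exact Or.inr (Or.inr ⟨h, hc⟩)
        · exact Or.inr (Or.inl h)
    · rw [if_neg hbr, if_neg hbr]
      have ht1 : 1 ≤ t := by
        by_contra h
        have : t = 0 := by omega
        rw [this, firstIdx_zero] at hbr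
        omega
      have hf := firstIdx_mem n Y ht1
      have hft := hf.2.1
      have hf1 := hf.1
      apply ih
      · omega
      · rcases hcond with hc | hc
        · left; omega
        · rcases H.firstIdx_Y_outside hc htk with h | h
          · left; omega
          · right; omega

end PCtx

/-- key step of Theorem 2, eq. (2.17): the SDMMSA estimates are invariant
under one PAVA pooling step.  If `Ȳ_j > Ȳ_{j+1}`, `j_l` is the smallest integer with
`Ȳ_i = Ȳ_j` on `[j_l, j]`, `j_u` is the largest integer with `Ȳ_i = Ȳ_{j+1}` on
`[j+1, j_u]`, and the values on `[j_l, j_u]` are all replaced by the pooled mean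
`Ȳ_{j_l, j_u}`, then the SDMMSA estimates do not change. -/
theorem sdmmsa_pava_step_invariant (k : ℕ) (hk : 1 ≤ k) (n Y : ℕ → ℝ)
    (hn : ∀ h, 1 ≤ h → h ≤ k → 0 < n h)
    (j : ℕ) (hj1 : 1 ≤ j) (hjk : j + 1 ≤ k) (hviol : Y (j + 1) < Y j)
    (jl ju : ℕ)
    (hjl1 : 1 ≤ jl) (hjlj : jl ≤ j)
    (hjlconst : ∀ i, jl ≤ i → i ≤ j → Y i = Y j)
    (hjlmin : ∀ i', 1 ≤ i' → i' ≤ j → (∀ i, i' ≤ i → i ≤ j → Y i = Y j) → jl ≤ i')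
    (hju1 : j + 1 ≤ ju) (hjuk : ju ≤ k)
    (hjuconst : ∀ i, j + 1 ≤ i → i ≤ ju → Y i = Y (j + 1))
    (hjumax : ∀ u', u' ≤ k → (∀ i, j + 1 ≤ i → i ≤ u' → Y i = Y (j + 1)) → u' ≤ ju) :
    ∀ i, 1 ≤ i → i ≤ k →
      muhat n Y k i =
        muhat n (fun v => if jl ≤ v ∧ v ≤ ju then pooledMean n Y jl ju else Y v) k i := by
  intro i _ _
  have H : PCtx n Y k j jl ju :=
    ⟨hn, hj1, hjk, hviol, hjl1, hjlj, hjlconst, hju1, hjuk, hjuconst⟩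
  exact H.sdmmsa_eq k k i le_rfl (Or.inr hjuk)
end

section
/- (Theorem 3, deterministic part) For each i and j in [1,k], the SDMMSA estimate μ̂_{i,k}, viewed as a function of the j-th data value Ȳ_j with all other data values Ȳ_{j'} (j' ≠ j) and all weights held fixed, is nondecreasing: if y ≤ y' then μ̂_{i,k}(Ȳ_1,…,Ȳ_{j−1}, y, Ȳ_{j+1},…,Ȳ_k) ≤ μ̂_{i,k}(Ȳ_1,…,Ȳ_{j−1}, y', Ȳ_{j+1},…,Ȳ_k). -/
open Finset

section AuxProof

private lemma sum_Icc_split_s7 (f : ℕ → ℝ) {a b c : ℕ} (hab : a ≤ b) (hbc : b < c) :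
    ∑ h ∈ Finset.Icc a c, f h
      = (∑ h ∈ Finset.Icc a b, f h) + ∑ h ∈ Finset.Icc (b+1) c, f h := by
  rw [← Finset.sum_union (by
    rw [Finset.disjoint_left]; intro x hx hx'
    simp only [Finset.mem_Icc] at hx hx'; omega)]
  congr 1
  ext x
  simp only [Finset.mem_union, Finset.mem_Icc]
  omega

variable {n : ℕ → ℝ} {k : ℕ}

private lemma pw_pos (hn : ∀ h, 1 ≤ h → h ≤ k → 0 < n h) {a b : ℕ}
    (ha : 1 ≤ a) (hab : a ≤ b) (hbk : b ≤ k) : 0 < pooledWeight n a b :=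
  Finset.sum_pos (fun h hh => by
      rw [Finset.mem_Icc] at hh; exact hn h (le_trans ha hh.1) (le_trans hh.2 hbk))
    ⟨a, Finset.mem_Icc.mpr ⟨le_rfl, hab⟩⟩

private lemma pm_comb (hn : ∀ h, 1 ≤ h → h ≤ k → 0 < n h) (Y : ℕ → ℝ) {a b c : ℕ}
    (ha : 1 ≤ a) (hab : a ≤ b) (hbc : b < c) (hck : c ≤ k) :
    pooledWeight n a c * pooledMean n Y a c
      = pooledWeight n a b * pooledMean n Y a b
        + pooledWeight n (b+1) c * pooledMean n Y (b+1) c := by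
  have h1 : (0:ℝ) < pooledWeight n a b := pw_pos hn ha hab (le_trans (le_of_lt hbc) hck)
  have h2 : (0:ℝ) < pooledWeight n (b+1) c := pw_pos hn (by omega) hbc hck
  have h3 : (0:ℝ) < pooledWeight n a c := pw_pos hn ha (by omega) hck
  rw [pooledMean, pooledMean, pooledMean, mul_div_cancel₀ _ h1.ne', mul_div_cancel₀ _ h2.ne',
    mul_div_cancel₀ _ h3.ne']
  exact sum_Icc_split_s7 _ hab hbc

/-- If the right piece's mean is ≤ the total mean, the total mean ≤ left piece's mean. -/
private lemma split_le (hn : ∀ h, 1 ≤ h → h ≤ k → 0 < n h) (Y : ℕ → ℝ) {a b c : ℕ}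
    (ha : 1 ≤ a) (hab : a ≤ b) (hbc : b < c) (hck : c ≤ k)
    (h : pooledMean n Y (b+1) c ≤ pooledMean n Y a c) :
    pooledMean n Y a c ≤ pooledMean n Y a b := by
  have h1 : (0:ℝ) < pooledWeight n a b := pw_pos hn ha hab (le_trans (le_of_lt hbc) hck)
  have h2 : (0:ℝ) < pooledWeight n (b+1) c := pw_pos hn (by omega) hbc hck
  have h3 : pooledWeight n a c = pooledWeight n a b + pooledWeight n (b+1) c :=
    sum_Icc_split_s7 _ hab hbc
  have h4 := pm_comb hn Y ha hab hbc hck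
  have h3' : pooledWeight n a c * pooledMean n Y a c
      = pooledWeight n a b * pooledMean n Y a c
        + pooledWeight n (b+1) c * pooledMean n Y a c := by rw [h3]; ring
  nlinarith [h4, h3', mul_nonneg h2.le (sub_nonneg.mpr h)]

/-- If the total mean < the right piece's mean, then the left piece's mean < right piece's. -/
private lemma split_lt (hn : ∀ h, 1 ≤ h → h ≤ k → 0 < n h) (Y : ℕ → ℝ) {a b c : ℕ}
    (ha : 1 ≤ a) (hab : a ≤ b) (hbc : b < c) (hck : c ≤ k)
    (h : pooledMean n Y a c < pooledMean n Y (b+1) c) :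
    pooledMean n Y a b < pooledMean n Y (b+1) c := by
  have h1 : (0:ℝ) < pooledWeight n a b := pw_pos hn ha hab (le_trans (le_of_lt hbc) hck)
  have h2 : (0:ℝ) < pooledWeight n (b+1) c := pw_pos hn (by omega) hbc hck
  have h3 : pooledWeight n a c = pooledWeight n a b + pooledWeight n (b+1) c :=
    sum_Icc_split_s7 _ hab hbc
  have h4 := pm_comb hn Y ha hab hbc hck
  have h3' : pooledWeight n a c * pooledMean n Y a c
      = pooledWeight n a b * pooledMean n Y a c
        + pooledWeight n (b+1) c * pooledMean n Y a c := by rw [h3]; ring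
  nlinarith [h4, h3', mul_pos h1 h2, mul_lt_mul_of_pos_left h h1, mul_lt_mul_of_pos_left h h2]

private lemma firstIdx_spec (n Y : ℕ → ℝ) {t : ℕ} (ht : 1 ≤ t) :
    1 ≤ firstIdx n Y t ∧ firstIdx n Y t ≤ t ∧
    (∀ j', 1 ≤ j' → j' ≤ t → pooledMean n Y j' t ≤ pooledMean n Y (firstIdx n Y t) t) ∧
    (∀ a, 1 ≤ a → a < firstIdx n Y t → pooledMean n Y a t < pooledMean n Y (firstIdx n Y t) t) := by
  set S : Set ℕ :=
    {j | 1 ≤ j ∧ j ≤ t ∧ ∀ j', 1 ≤ j' → j' ≤ t → pooledMean n Y j' t ≤ pooledMean n Y j t}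
    with hS
  have hne : S.Nonempty := by
    obtain ⟨x, hx, hmax⟩ := Finset.exists_max_image (Finset.Icc 1 t)
      (fun j => pooledMean n Y j t) ⟨1, Finset.mem_Icc.mpr ⟨le_rfl, ht⟩⟩
    rw [Finset.mem_Icc] at hx
    exact ⟨x, hx.1, hx.2, fun j' h1 h2 => hmax j' (Finset.mem_Icc.mpr ⟨h1, h2⟩)⟩
  have hmem : firstIdx n Y t ∈ S := Nat.sInf_mem hne
  obtain ⟨m1, m2, m3⟩ := hmem
  refine ⟨m1, m2, m3, fun a ha hlt => ?_⟩
  have hfi : firstIdx n Y t = sInf S := rfl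
  have hna : a ∉ S := by
    intro hmem'
    have hle := Nat.sInf_le hmem'
    rw [← hfi] at hle
    omega
  rw [hS, Set.mem_setOf_eq] at hna
  push_neg at hna
  obtain ⟨j', hj1, hj2, hj3⟩ := hna ha (by omega)
  exact lt_of_lt_of_le hj3 (m3 j' hj1 hj2)

/-- `Mfun n Y b` : max of `Ȳ_{a,b}` over `a ∈ [1,b]` (with a junk `a = b` element so it is
total). -/
private noncomputable def Mfun (n Y : ℕ → ℝ) (b : ℕ) : ℝ :=
  (insert b (Finset.Icc 1 b)).sup' (Finset.insert_nonempty _ _) (fun a => pooledMean n Y a b)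

/-- `Ifun n Y i t` : min of `Mfun n Y b` over `b ∈ [i,t]` (with junk `b = t`). -/
private noncomputable def Ifun (n Y : ℕ → ℝ) (i t : ℕ) : ℝ :=
  (insert t (Finset.Icc i t)).inf' (Finset.insert_nonempty _ _) (Mfun n Y)

private lemma insert_Icc_eq {a b : ℕ} (h : a ≤ b) :
    insert b (Finset.Icc a b) = Finset.Icc a b :=
  Finset.insert_eq_self.mpr (Finset.mem_Icc.mpr ⟨h, le_rfl⟩)

private lemma le_Mfun (Y : ℕ → ℝ) {a b : ℕ} (h1 : 1 ≤ a) (h2 : a ≤ b) :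
    pooledMean n Y a b ≤ Mfun n Y b := by
  rw [Mfun]
  exact Finset.le_sup' (fun a => pooledMean n Y a b) (Finset.mem_insert_of_mem (Finset.mem_Icc.mpr ⟨h1, h2⟩))

private lemma Mfun_le (Y : ℕ → ℝ) {b : ℕ} (hb : 1 ≤ b) {x : ℝ}
    (h : ∀ a, 1 ≤ a → a ≤ b → pooledMean n Y a b ≤ x) : Mfun n Y b ≤ x := by
  rw [Mfun]
  refine Finset.sup'_le _ _ (fun a ha => ?_)
  rcases Finset.mem_insert.mp ha with rfl | ha
  · exact h a hb le_rfl
  · rw [Finset.mem_Icc] at ha; exact h a ha.1 ha.2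

private lemma Mfun_lt (Y : ℕ → ℝ) {b : ℕ} (hb : 1 ≤ b) {x : ℝ}
    (h : ∀ a, 1 ≤ a → a ≤ b → pooledMean n Y a b < x) : Mfun n Y b < x := by
  rw [Mfun, Finset.sup'_lt_iff]
  intro a ha
  rcases Finset.mem_insert.mp ha with rfl | ha
  · exact h a hb le_rfl
  · rw [Finset.mem_Icc] at ha; exact h a ha.1 ha.2

private lemma Ifun_le (Y : ℕ → ℝ) {i t b : ℕ} (h1 : i ≤ b) (h2 : b ≤ t) :
    Ifun n Y i t ≤ Mfun n Y b := by
  rw [Ifun]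
  exact Finset.inf'_le (Mfun n Y) (Finset.mem_insert_of_mem (Finset.mem_Icc.mpr ⟨h1, h2⟩))

private lemma le_Ifun (Y : ℕ → ℝ) {i t : ℕ} (hit : i ≤ t) {x : ℝ}
    (h : ∀ b, i ≤ b → b ≤ t → x ≤ Mfun n Y b) : x ≤ Ifun n Y i t := by
  rw [Ifun]
  refine Finset.le_inf' _ _ (fun b hb => ?_)
  rcases Finset.mem_insert.mp hb with rfl | hb
  · exact h b hit le_rfl
  · rw [Finset.mem_Icc] at hb; exact h b hb.1 hb.2

/-- Closed form: the SDMMSA estimate is `min_{b∈[i,t]} max_{a∈[1,b]} Ȳ_{a,b}`. -/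
private lemma sdmmsa_closed (hn : ∀ h, 1 ≤ h → h ≤ k → 0 < n h) (Y : ℕ → ℝ) :
    ∀ t fuel i, 1 ≤ i → i ≤ t → t ≤ k → t ≤ fuel →
      sdmmsaAux n Y fuel t i = Ifun n Y i t := by
  intro t
  induction t using Nat.strong_induction_on with
  | _ t IH =>
    intro fuel i hi hit htk hfuel
    obtain ⟨f, rfl⟩ : ∃ f, fuel = f + 1 := ⟨fuel - 1, by omega⟩
    obtain ⟨h1, h2, hmax, hstrict⟩ := firstIdx_spec n Y (le_trans hi hit)
    set i1 := firstIdx n Y t with hi1def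
    have hMt : Mfun n Y t = pooledMean n Y i1 t :=
      le_antisymm (Mfun_le Y (le_trans hi hit) hmax) (le_Mfun Y h1 h2)
    have K1 : ∀ b, i1 ≤ b → b ≤ t → pooledMean n Y i1 t ≤ Mfun n Y b := by
      intro b hb1 hb2
      rcases eq_or_lt_of_le hb2 with rfl | hblt
      · exact hMt.ge
      · refine le_trans ?_ (le_Mfun Y h1 hb1)
        exact split_le hn Y h1 hb1 hblt htk (hmax (b+1) (by omega) (by omega))
    simp only [sdmmsaAux, ← hi1def]
    by_cases hcase : i1 ≤ i
    · rw [if_pos hcase]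
      refine le_antisymm (le_Ifun Y hit (fun b hb1 hb2 => K1 b (le_trans hcase hb1) hb2)) ?_
      exact le_trans (Ifun_le Y hit le_rfl) hMt.le
    · rw [if_neg hcase]
      push_neg at hcase
      have hi1t : i1 - 1 < t := by omega
      rw [IH (i1 - 1) hi1t f i hi (by omega) (by omega) (by omega)]
      have hsub : i1 - 1 + 1 = i1 := by omega
      have K2 : Mfun n Y (i1 - 1) < pooledMean n Y i1 t := by
        refine Mfun_lt Y (by omega) (fun a ha1 ha2 => ?_)
        have h5 : pooledMean n Y a t < pooledMean n Y (i1 - 1 + 1) t := by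
          rw [hsub]; exact hstrict a ha1 (by omega)
        have hsl := split_lt hn Y ha1 ha2 (by omega) htk h5
        rwa [hsub] at hsl
      refine le_antisymm ?_ ?_
      · refine le_Ifun Y hit (fun b hb1 hb2 => ?_)
        by_cases hb : b ≤ i1 - 1
        · exact Ifun_le Y hb1 hb
        · exact le_trans (le_trans (Ifun_le Y (by omega) le_rfl) K2.le) (K1 b (by omega) hb2)
      · refine le_Ifun Y (by omega) (fun b hb1 hb2 => Ifun_le Y hb1 (by omega))

private lemma pm_update_mono (hn : ∀ h, 1 ≤ h → h ≤ k → 0 < n h) (Y : ℕ → ℝ) (j : ℕ)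
    {y y' : ℝ} (hyy' : y ≤ y') {a b : ℕ} (ha : 1 ≤ a) (hab : a ≤ b) (hbk : b ≤ k) :
    pooledMean n (Function.update Y j y) a b ≤ pooledMean n (Function.update Y j y') a b := by
  have hw := pw_pos hn ha hab hbk
  rw [pooledMean, pooledMean, div_le_div_iff₀ hw hw]
  rw [mul_le_mul_iff_of_pos_right hw]
  refine Finset.sum_le_sum (fun h hh => ?_)
  rw [Finset.mem_Icc] at hh
  rcases eq_or_ne h j with rfl | hne
  · simp only [Function.update_self]
    exact mul_le_mul_of_nonneg_left hyy' (hn h (le_trans ha hh.1) (le_trans hh.2 hbk)).le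
  · rw [Function.update_of_ne hne, Function.update_of_ne hne]

end AuxProof

/-- Theorem 3, deterministic part: for `i, j ∈ [1,k]`, the SDMMSA estimate
`μ̂_{i,k}`, as a function of the `j`-th data value with everything else held fixed, is
nondecreasing. -/
theorem sdmmsa_coordinatewise_monotone (k : ℕ) (hk : 1 ≤ k) (n Y : ℕ → ℝ)
    (hn : ∀ h, 1 ≤ h → h ≤ k → 0 < n h)
    (i j : ℕ) (hi1 : 1 ≤ i) (hik : i ≤ k) (hj1 : 1 ≤ j) (hjk : j ≤ k)
    (y y' : ℝ) (hyy' : y ≤ y') :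
    muhat n (Function.update Y j y) k i ≤ muhat n (Function.update Y j y') k i := by
  rw [muhat, muhat, sdmmsa_closed hn _ k k i hi1 hik le_rfl le_rfl,
    sdmmsa_closed hn _ k k i hi1 hik le_rfl le_rfl]
  refine le_Ifun _ hik (fun b hb1 hb2 => ?_)
  refine le_trans (Ifun_le _ hb1 hb2) ?_
  refine Mfun_le _ (le_trans hi1 hb1) (fun a ha1 ha2 => ?_)
  exact le_trans (pm_update_mono hn Y j hyy' ha1 ha2 hb2)
    (le_Mfun _ ha1 ha2)
end

section
/- (Equation (2.22), first case) Let m ≥ 1 and consider data (Ȳ_1,n_1),…,(Ȳ_{m+1},n_{m+1}). Let μ̂_{j,m} denote the SDMMSA estimates computed from the first m data points, and let i_1(m+1) denote the first SDMMSA index computed from all m+1 data points (i.e., the smallest index attaining max_{1 ≤ j ≤ m+1} Ȳ_{j,m+1}). If Ȳ_{m+1} > μ̂_{m,m}, then i_1(m+1) = m+1. -/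
open Finset

lemma firstIdx_mem_s9 {n Y : ℕ → ℝ} {t : ℕ} (ht : 1 ≤ t) :
    1 ≤ firstIdx n Y t ∧ firstIdx n Y t ≤ t ∧
      ∀ j', 1 ≤ j' → j' ≤ t → pooledMean n Y j' t ≤ pooledMean n Y (firstIdx n Y t) t := by
  have hne : {j | 1 ≤ j ∧ j ≤ t ∧ ∀ j', 1 ≤ j' → j' ≤ t →
      pooledMean n Y j' t ≤ pooledMean n Y j t}.Nonempty := by
    obtain ⟨b, hb, hmax⟩ := Finset.exists_max_image (Finset.Icc 1 t)
      (fun j => pooledMean n Y j t) ⟨1, by simp [ht]⟩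
    rw [Finset.mem_Icc] at hb
    exact ⟨b, hb.1, hb.2, fun j' h1 h2 => hmax j' (Finset.mem_Icc.mpr ⟨h1, h2⟩)⟩
  exact Nat.sInf_mem hne

/-- eq. (2.22), first case: if `Ȳ_{m+1} > μ̂_{m,m}`, the first SDMMSA index
for the `m+1` data points is `i_1(m+1) = m+1`. -/
theorem firstIdx_succ_of_large_last (m : ℕ) (hm : 1 ≤ m) (n Y : ℕ → ℝ)
    (hn : ∀ h, 1 ≤ h → h ≤ m + 1 → 0 < n h)
    (hY : muhat n Y m m < Y (m + 1)) :
    firstIdx n Y (m + 1) = m + 1 := by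
  have hWpos : ∀ i j : ℕ, 1 ≤ i → i ≤ j → j ≤ m + 1 → 0 < pooledWeight n i j := by
    intro i j h1 h2 h3
    apply Finset.sum_pos
    · intro h hh
      rw [Finset.mem_Icc] at hh
      exact hn h (le_trans h1 hh.1) (le_trans hh.2 h3)
    · exact ⟨i, Finset.mem_Icc.mpr ⟨le_refl i, h2⟩⟩
  obtain ⟨hi1, hi2, hi3⟩ := firstIdx_mem_s9 (n := n) (Y := Y) hm
  have hmu : muhat n Y m m = pooledMean n Y (firstIdx n Y m) m := by
    obtain ⟨k, rfl⟩ : ∃ k, m = k + 1 := ⟨m - 1, (Nat.succ_pred_eq_of_pos hm).symm⟩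
    rw [muhat, sdmmsaAux, if_pos hi2]
  have key : ∀ j, 1 ≤ j → j ≤ m → pooledMean n Y j (m + 1) < Y (m + 1) := by
    intro j h1 h2
    have hW : 0 < pooledWeight n j m := hWpos j m h1 h2 (by omega)
    have hle : pooledMean n Y j m ≤ muhat n Y m m := hmu ▸ hi3 j h1 h2
    have hN : ∑ h ∈ Finset.Icc j m, n h * Y h ≤ pooledWeight n j m * muhat n Y m m := by
      rw [pooledMean, div_le_iff₀ hW] at hle
      linarith [hle]
    have hnm : 0 < n (m + 1) := hn (m + 1) (by omega) (le_refl _)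
    rw [pooledMean, pooledWeight, Finset.sum_Icc_succ_top (by omega : j ≤ m + 1),
      Finset.sum_Icc_succ_top (by omega : j ≤ m + 1)]
    rw [div_lt_iff₀ (by rw [pooledWeight] at hW; linarith)]
    have : ∑ h ∈ Finset.Icc j m, n h * Y h < pooledWeight n j m * Y (m + 1) := by
      calc ∑ h ∈ Finset.Icc j m, n h * Y h ≤ pooledWeight n j m * muhat n Y m m := hN
        _ < pooledWeight n j m * Y (m + 1) := by exact mul_lt_mul_of_pos_left hY hW
    rw [pooledWeight] at this
    nlinarith
  have htop : pooledMean n Y (m + 1) (m + 1) = Y (m + 1) := by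
    have hnm : n (m + 1) ≠ 0 := ne_of_gt (hn (m + 1) (by omega) (le_refl _))
    rw [pooledMean, pooledWeight, Finset.Icc_self, Finset.sum_singleton,
      Finset.sum_singleton, mul_comm, mul_div_assoc, div_self hnm, mul_one]
  have hmemS : (m + 1) ∈ {j | 1 ≤ j ∧ j ≤ m + 1 ∧ ∀ j', 1 ≤ j' → j' ≤ m + 1 →
      pooledMean n Y j' (m + 1) ≤ pooledMean n Y j (m + 1)} := by
    refine ⟨by omega, le_refl _, fun j' h1 h2 => ?_⟩
    rcases eq_or_lt_of_le h2 with h | h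
    · rw [h]
    · rw [htop]; exact le_of_lt (key j' h1 (by omega))
  have hle' : firstIdx n Y (m + 1) ≤ m + 1 := Nat.sInf_le hmemS
  obtain ⟨hj1, hj2, hj3⟩ := firstIdx_mem_s9 (n := n) (Y := Y) (t := m + 1) (by omega)
  by_contra hne
  have hlt : firstIdx n Y (m + 1) ≤ m := by omega
  have h1 := key (firstIdx n Y (m + 1)) hj1 hlt
  have h2 := hj3 (m + 1) (by omega) (le_refl _)
  rw [htop] at h2
  linarith
end
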